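/- Let V be a Hilbert space over 𝕂 = ℝ or ℂ, let A₀ be a densely defined skew-symmetric operator on V, and let B be a dissipative operator on V with A₀ ⊆ B. Then B ⊆ (−A₀)*, i.e. every element y of D(B) belongs to the domain of the adjoint of −A₀ and (−A₀)* y = B y. -/
import Mathlib


variable {𝕜 V : Type*} [RCLike 𝕜] [NormedAddCommGroup V] [InnerProductSpace 𝕜 V]
  [CompleteSpace V]

/-- An operator `A` on `V` is *dissipative* if `Re ⟪Ax, x⟫ ≤ 0` for all `x ∈ D(A)`. -/
def Dissipative (A : V →ₗ.[𝕜] V) : Prop :=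
  ∀ x : A.domain, RCLike.re (@inner 𝕜 _ _ (A x) (x : V)) ≤ 0

/-- An operator `A` on `V` is *skew-symmetric* if `⟪Au, v⟫ + ⟪u, Av⟫ = 0` for all
`u, v ∈ D(A)`. -/
def SkewSymmetric (A : V →ₗ.[𝕜] V) : Prop :=
  ∀ u v : A.domain, @inner 𝕜 _ _ (A u) (v : V) + @inner 𝕜 _ _ (u : V) (A v) = 0

/-- If `A₀` is a densely defined skew-symmetric operator and `B` is a dissipative operator
extending `A₀`, then `B ⊆ (-A₀)*`. -/
theorem dissipative_extension_le_adjoint_neg (A₀ B : V →ₗ.[𝕜] V)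
    (hdense : Dense (A₀.domain : Set V)) (hskew : SkewSymmetric A₀)
    (hB : Dissipative B) (hA₀B : A₀ ≤ B) :
    B ≤ (-A₀).adjoint := by
  have key : (-A₀).IsFormalAdjoint B := by
    intro x y
    have hxmem : (x : V) ∈ A₀.domain := x.2
    let u : A₀.domain := ⟨x.1, hxmem⟩
    let w : B.domain := ⟨x.1, hA₀B.1 hxmem⟩
    have hBw : B w = A₀ u := (hA₀B.2 (x := u) (y := w) rfl).symm
    have hR0 : RCLike.re (@inner 𝕜 _ _ ((B y : V)) ((y : V))) ≤ 0 := hB y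
    set R : ℝ := RCLike.re (@inner 𝕜 _ _ ((B y : V)) ((y : V))) with hRdef
    have hre0 : RCLike.re (@inner 𝕜 _ _ ((A₀ u : V)) ((x : V))) = 0 := by
      have h1 := congrArg RCLike.re (hskew u u)
      simp only [map_add, map_zero] at h1
      have h2 : RCLike.re (@inner 𝕜 _ _ ((u : V)) ((A₀ u : V)))
          = RCLike.re (@inner 𝕜 _ _ ((A₀ u : V)) ((u : V))) := inner_re_symm _ _
      have h3 : ((u : V)) = (x : V) := rfl
      rw [h3] at h1 h2
      linarith
    set a : 𝕜 := @inner 𝕜 _ _ ((A₀ u : V)) (y : V) with ha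
    set b : 𝕜 := @inner 𝕜 _ _ ((B y : V)) ((x : V)) with hb
    have main : ∀ c : 𝕜, RCLike.re (c * (a + (starRingEnd 𝕜) b)) ≤ -(‖c‖ ^ 2 * R) := by
      intro c
      have hw := hB (w + c • y)
      have hadd : B (w + c • y) = A₀ u + c • B y := by
        rw [B.map_add, B.map_smul, hBw]
      have hcoe : (((w + c • y : B.domain)) : V) = (x : V) + c • (y : V) := rfl
      rw [hadd, hcoe, inner_add_left, inner_add_right, inner_add_right, inner_smul_left,
        inner_smul_left, inner_smul_right, inner_smul_right] at hw
      have hcc : (starRingEnd 𝕜) c * (c * @inner 𝕜 _ _ ((B y : V)) ((y : V)))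
          = ((‖c‖ ^ 2 : ℝ) : 𝕜) * @inner 𝕜 _ _ ((B y : V)) ((y : V)) := by
        rw [← mul_assoc, RCLike.conj_mul]; norm_cast
      rw [hcc] at hw
      simp only [map_add] at hw
      rw [hre0, RCLike.re_ofReal_mul, ← hRdef] at hw
      have h4 : RCLike.re ((starRingEnd 𝕜) c * b) = RCLike.re (c * (starRingEnd 𝕜) b) := by
        rw [← RCLike.conj_re ((starRingEnd 𝕜) c * b), map_mul, RCLike.conj_conj]
      rw [mul_add, map_add]
      linarith
    have main0 : ∀ c : 𝕜, RCLike.re (c * (a + (starRingEnd 𝕜) b)) ≤ 0 := by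
      intro c
      by_contra hpos
      push_neg at hpos
      set F := RCLike.re (c * (a + (starRingEnd 𝕜) b)) with hF
      set K : ℝ := ‖c‖ ^ 2 * (-R) with hK
      have hK0 : 0 ≤ K := by
        apply mul_nonneg (by positivity); linarith
      set t : ℝ := F / (2 * (K + 1)) with ht
      have ht0 : 0 < t := by positivity
      have := main (((t : ℝ) : 𝕜) * c)
      rw [mul_assoc, RCLike.re_ofReal_mul] at this
      have hnorm : ‖((t : ℝ) : 𝕜) * c‖ ^ 2 = t ^ 2 * ‖c‖ ^ 2 := by
        rw [norm_mul, RCLike.norm_ofReal, abs_of_pos ht0, mul_pow]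
      rw [hnorm] at this
      -- t * F ≤ -(t^2 * ‖c‖^2 * R) = t^2 * K
      have h5 : t * F ≤ t ^ 2 * K := by rw [hK]; nlinarith [this]
      have h6 : F ≤ t * K := by
        have h5' : t * F ≤ t * (t * K) := by nlinarith [h5]
        exact le_of_mul_le_mul_left h5' ht0
      rw [ht] at h6
      have h7 : F / (2 * (K + 1)) * K < F := by
        rw [div_mul_eq_mul_div, div_lt_iff₀ (by linarith)]
        nlinarith
      linarith
    have hzero : a + (starRingEnd 𝕜) b = 0 := by
      have := main0 ((starRingEnd 𝕜) (a + (starRingEnd 𝕜) b))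
      rw [RCLike.conj_mul] at this
      have hn : ‖a + (starRingEnd 𝕜) b‖ ^ 2 ≤ 0 := by
        rw [← RCLike.ofReal_pow, RCLike.ofReal_re] at this
        exact this
      have : ‖a + (starRingEnd 𝕜) b‖ = 0 := by nlinarith [norm_nonneg (a + (starRingEnd 𝕜) b)]
      exact norm_eq_zero.mp this
    -- conclude
    have hneg : ((-A₀) x : V) = -(A₀ u : V) := by
      exact A₀.neg_apply x
    rw [hneg]
    have : a = -(starRingEnd 𝕜) b := by linear_combination hzero
    rw [inner_neg_left, ← ha, this, neg_neg, hb, inner_conj_symm]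
  have hdense' : Dense ((-A₀).domain : Set V) := hdense
  exact key.le_adjoint hdense'
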